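/- Let p_d, p_c, p_cd be reals with 0 ≤ p_cd ≤ p_c ≤ p_d ≤ 1, p_c + p_d − p_cd ≤ 1, and p_cd > p_d − p_c (Regime 2). Let M, N be positive integers with M ≤ N and 3M > 2N, and suppose N = 3k + 1 for an integer k (the case q = 1). Define f(a) := min( ⟨2M, 0, 2M⟩ − a·⟨2M−4k−1, −(2k+1), 2k+1⟩, ⟨N, M, M⟩ + a·k·p_cd ) for a ∈ [0,1]. Then: (i) if (2M−4k−1)·p_cd ≤ (2k+1)·(p_d − p_c), the maximum of f over [0,1] equals ⟨4k+1, 2k+1, 2M−2k−1⟩, attained at a = 1; (ii) if (2M−4k−1)·p_cd > (2k+1)·(p_d − p_c), the maximum of f over [0,1] equals ⟨N, M, M⟩ + k·p_cd·⟨2M−N, −M, M⟩/⟨2M−N, −(2k+1), 2k+1⟩, attained at a = ⟨2M−N, −M, M⟩/⟨2M−N, −(2k+1), 2k+1⟩. (This is the q = 1 case of Proposition 3, establishing the lower bound η_lb,1 of Theorem 3.) -/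

import Mathlib

/-- The η-triple ⟨a,b,c⟩ = a·p_cd + b·(p_d − p_cd) + c·(p_c − p_cd). -/
noncomputable def etaTriple (p_d p_c p_cd a b c : ℝ) : ℝ :=
  a * p_cd + b * (p_d - p_cd) + c * (p_c - p_cd)

/-- Proposition 3 (case q = 1): optimal power tuning and achievable sum DoF of
the HKIA scheme on the Type I bursty MIMO X channel in Regime 2, N = 3k + 1. -/
theorem hkia_typeI_q1_optimum (p_d p_c p_cd : ℝ) (M N k : ℕ)
    (h0 : 0 ≤ p_cd) (h1 : p_cd ≤ p_c) (h2 : p_c ≤ p_d) (h3 : p_d ≤ 1)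
    (h4 : p_c + p_d - p_cd ≤ 1) (hreg2 : p_d - p_c < p_cd)
    (hM : 0 < M) (hN : 0 < N) (hMN : M ≤ N) (h23 : 2*N < 3*M)
    (hk : N = 3*k + 1) :
    letI f : ℝ → ℝ := fun a =>
      min (etaTriple p_d p_c p_cd (2*(M:ℝ)) 0 (2*(M:ℝ)) -
            a * etaTriple p_d p_c p_cd (2*(M:ℝ) - 4*k - 1) (-(2*(k:ℝ) + 1)) (2*(k:ℝ) + 1))
          (etaTriple p_d p_c p_cd (N:ℝ) (M:ℝ) (M:ℝ) + a * (k:ℝ) * p_cd)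
    ((2*(M:ℝ) - 4*k - 1) * p_cd ≤ (2*(k:ℝ) + 1) * (p_d - p_c) →
      f 1 = etaTriple p_d p_c p_cd (4*(k:ℝ) + 1) (2*(k:ℝ) + 1) (2*(M:ℝ) - 2*k - 1) ∧
      ∀ a ∈ Set.Icc (0:ℝ) 1, f a ≤ f 1) ∧
    ((2*(k:ℝ) + 1) * (p_d - p_c) < (2*(M:ℝ) - 4*k - 1) * p_cd →
      letI a₀ : ℝ := etaTriple p_d p_c p_cd (2*(M:ℝ) - N) (-(M:ℝ)) (M:ℝ) /
        etaTriple p_d p_c p_cd (2*(M:ℝ) - N) (-(2*(k:ℝ) + 1)) (2*(k:ℝ) + 1)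
      a₀ ∈ Set.Icc (0:ℝ) 1 ∧
      f a₀ = etaTriple p_d p_c p_cd (N:ℝ) (M:ℝ) (M:ℝ) +
        (k:ℝ) * p_cd * etaTriple p_d p_c p_cd (2*(M:ℝ) - N) (-(M:ℝ)) (M:ℝ) /
          etaTriple p_d p_c p_cd (2*(M:ℝ) - N) (-(2*(k:ℝ) + 1)) (2*(k:ℝ) + 1) ∧
      ∀ a ∈ Set.Icc (0:ℝ) 1, f a ≤ f a₀) := by
  have hMk : (2*(k:ℝ) + 1) ≤ (M:ℝ) := by
    have : 2*k + 1 ≤ M := by omega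
    exact_mod_cast this
  have hNk : (N:ℝ) = 3*(k:ℝ) + 1 := by exact_mod_cast hk
  have hMNr : (M:ℝ) ≤ (N:ℝ) := by exact_mod_cast hMN
  have hMpos : (0:ℝ) < (M:ℝ) := by exact_mod_cast hM
  have hknn : (0:ℝ) ≤ (k:ℝ) := Nat.cast_nonneg k
  beta_reduce
  -- shorthand names
  set A := etaTriple p_d p_c p_cd (2*(M:ℝ)) 0 (2*(M:ℝ)) with hA
  set B := etaTriple p_d p_c p_cd (2*(M:ℝ) - 4*k - 1) (-(2*(k:ℝ) + 1)) (2*(k:ℝ) + 1) with hB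
  set C := etaTriple p_d p_c p_cd (N:ℝ) (M:ℝ) (M:ℝ) with hC
  set Num := etaTriple p_d p_c p_cd (2*(M:ℝ) - N) (-(M:ℝ)) (M:ℝ) with hNum
  set Den := etaTriple p_d p_c p_cd (2*(M:ℝ) - N) (-(2*(k:ℝ) + 1)) (2*(k:ℝ) + 1) with hDen
  -- identities
  have hBval : B = (2*(M:ℝ) - 4*k - 1) * p_cd - (2*(k:ℝ) + 1) * (p_d - p_c) := by
    simp only [hB, etaTriple]; ring
  have hNumAC : Num = A - C := by
    simp only [hNum, hA, hC, etaTriple, hNk]; ring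
  have hDenB : Den = B + (k:ℝ) * p_cd := by
    simp only [hDen, hB, etaTriple, hNk]; ring
  have hDenNum : Den - Num = ((M:ℝ) - (2*(k:ℝ)+1)) * (p_d - p_c) := by
    simp only [hDen, hNum, etaTriple]; ring
  -- (A - B) ≤ (C + k p_cd)
  have hABCD : A - B ≤ C + (k:ℝ) * p_cd := by
    have key : (A - B) - (C + (k:ℝ)*p_cd) = ((M:ℝ) - (2*(k:ℝ)+1)) * (p_c - p_d) := by
      simp only [hA, hB, hC, etaTriple, hNk]; ring
    nlinarith [mul_nonneg (by linarith : (0:ℝ) ≤ (M:ℝ) - (2*(k:ℝ)+1)) (by linarith : (0:ℝ) ≤ p_d - p_c)]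
  constructor
  · -- case (i)
    intro hcase
    have hBle : B ≤ 0 := by rw [hBval]; linarith
    constructor
    · rw [min_eq_left (by linarith : A - 1 * B ≤ C + 1 * (k:ℝ) * p_cd)]
      simp only [hA, hB, etaTriple]; ring
    · intro a ⟨ha0, ha1⟩
      rw [min_eq_left (by linarith : A - 1 * B ≤ C + 1 * (k:ℝ) * p_cd)]
      have h1aB : (1 - a) * B ≤ 0 := mul_nonpos_of_nonneg_of_nonpos (by linarith) hBle
      have : A - a * B ≤ A - 1 * B := by linarith [h1aB]
      calc min (A - a * B) (C + a * (k:ℝ) * p_cd) ≤ A - a * B := min_le_left _ _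
        _ ≤ A - 1 * B := this
  · -- case (ii)
    intro hcase
    have hBpos : 0 < B := by rw [hBval]; linarith
    have hDenpos : 0 < Den := by
      have := mul_nonneg hknn h0
      rw [hDenB]; linarith
    have hNumpos : 0 ≤ Num := by
      have hmul : (M:ℝ) * ((2*(k:ℝ) + 1) * (p_d - p_c)) < (M:ℝ) * ((2*(M:ℝ) - 4*k - 1) * p_cd) :=
        mul_lt_mul_of_pos_left hcase hMpos
      have hid : (2*(k:ℝ)+1) * Num = (M:ℝ) * ((2*(M:ℝ) - 4*k - 1) * p_cd)
          - (M:ℝ) * ((2*(k:ℝ) + 1) * (p_d - p_c))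
          + p_cd * ((2*(M:ℝ) - 2*k - 1) * ((N:ℝ) - (M:ℝ))) := by
        simp only [hNum, etaTriple, hNk]; ring
      have h2k1 : (0:ℝ) < 2*(k:ℝ)+1 := by positivity
      have hpr : (0:ℝ) ≤ p_cd * ((2*(M:ℝ) - 2*k - 1) * ((N:ℝ) - (M:ℝ))) :=
        mul_nonneg h0 (mul_nonneg (by linarith) (by linarith))
      have hmn : 0 ≤ (2*(k:ℝ)+1) * Num := by rw [hid]; linarith
      exact nonneg_of_mul_nonneg_right hmn h2k1
    have hNumleDen : Num ≤ Den := by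
      have := mul_nonneg (by linarith : (0:ℝ) ≤ (M:ℝ) - (2*(k:ℝ)+1))
        (by linarith : (0:ℝ) ≤ p_d - p_c)
      linarith [hDenNum]
    set a₀ := Num / Den with ha₀
    have ha₀Den : a₀ * Den = Num := by
      rw [ha₀]; field_simp
    have hcross : A - a₀ * B = C + a₀ * (k:ℝ) * p_cd := by
      have : a₀ * (B + (k:ℝ) * p_cd) = A - C := by rw [← hDenB, ha₀Den, hNumAC]
      linarith [this]
    have ha₀0 : 0 ≤ a₀ := div_nonneg hNumpos hDenpos.le
    have ha₀1 : a₀ ≤ 1 := by rw [ha₀, div_le_one hDenpos]; exact hNumleDen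
    have hfa₀ : min (A - a₀ * B) (C + a₀ * (k:ℝ) * p_cd) = C + a₀ * (k:ℝ) * p_cd := by
      rw [hcross, min_self]
    refine ⟨⟨ha₀0, ha₀1⟩, ?_, ?_⟩
    · rw [hfa₀, ha₀]
      field_simp
    · intro a ⟨ha0, ha1⟩
      rcases le_total a a₀ with h | h
      · rw [hfa₀]
        calc min (A - a * B) (C + a * (k:ℝ) * p_cd) ≤ C + a * (k:ℝ) * p_cd := min_le_right _ _
          _ ≤ C + a₀ * (k:ℝ) * p_cd := by
              linarith [mul_le_mul_of_nonneg_right h (mul_nonneg hknn h0)]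
      · rw [hfa₀, ← hcross]
        calc min (A - a * B) (C + a * (k:ℝ) * p_cd) ≤ A - a * B := min_le_left _ _
          _ ≤ A - a₀ * B := by
              linarith [mul_le_mul_of_nonneg_right h hBpos.le]
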